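/- With notation as above, the multiplicity of (t_i,t_j] in B equals n(t_i,t_j} - n(t_i,t_{j+1}} - N(t_i,t_{j+1}), where N(t_i,t_{j+1}) is the multiplicity of the open interval (t_i,t_{j+1}) in B. -/
import Mathlib


open Classical Multiset

noncomputable section

/-- The four kinds of intervals: closed-closed, closed-open, open-closed, open-open. -/
inductive BarKind : Type
  | cc | co | oc | oo
  deriving DecidableEq

/-- A real interval of one of the four types, with endpoints `a ≤ b`. -/
structure Bar : Type where
  kind : BarKind
  a : ℝ
  b : ℝ

instance : DecidableEq Bar := Classical.decEq _

namespace Bar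

/-- The underlying set of points of the interval. -/
def toSet (I : Bar) : Set ℝ :=
  match I.kind with
  | .cc => Set.Icc I.a I.b
  | .co => Set.Ico I.a I.b
  | .oc => Set.Ioc I.a I.b
  | .oo => Set.Ioo I.a I.b

/-- Nonemptiness condition: `a ≤ b` for closed intervals, `a < b` otherwise. -/
def Valid (I : Bar) : Prop :=
  match I.kind with
  | .cc => I.a ≤ I.b
  | _ => I.a < I.b

def rightOpen (I : Bar) : Prop := I.kind = .co ∨ I.kind = .oo
def leftOpen (I : Bar) : Prop := I.kind = .oc ∨ I.kind = .oo
def leftClosed (I : Bar) : Prop := I.kind = .cc ∨ I.kind = .co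

end Bar

/-- `i(t,t')`: the number of intervals of `B` containing `[t,t']`. -/
def icount (B : Multiset Bar) (t t' : ℝ) : ℕ :=
  countP (fun I => Set.Icc t t' ⊆ I.toSet) B

/-- `l(t)`: the number of intervals of `B` containing `t`. -/
def lcount (B : Multiset Bar) (t : ℝ) : ℕ :=
  countP (fun I => t ∈ I.toSet) B

/-- `l⁺(t;t')`: intervals of `B` containing `t` with open right endpoint `≤ t'`. -/
def lplus (B : Multiset Bar) (t t' : ℝ) : ℕ :=
  countP (fun I => t ∈ I.toSet ∧ I.rightOpen ∧ I.b ≤ t') B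

/-- `l⁻(t;t'')`: intervals of `B` containing `t` with open left endpoint `≥ t''`. -/
def lminus (B : Multiset Bar) (t t'' : ℝ) : ℕ :=
  countP (fun I => t ∈ I.toSet ∧ I.leftOpen ∧ t'' ≤ I.a) B

/-- `e(t;t',t'')`: open intervals `(a,b)` of `B` with `t'' ≤ a < t < b ≤ t'`. -/
def ecount (B : Multiset Bar) (t t' t'' : ℝ) : ℕ :=
  countP (fun I => I.kind = .oo ∧ t'' ≤ I.a ∧ I.a < t ∧ t < I.b ∧ I.b ≤ t') B

/-- All endpoints of intervals of `B` lie among the critical values `t 0, …, t N`. -/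
def endpointsIn (B : Multiset Bar) (t : ℕ → ℝ) (N : ℕ) : Prop :=
  ∀ I ∈ B, (∃ i ≤ N, I.a = t i) ∧ (∃ j ≤ N, I.b = t j)

private lemma aux10 (N : ℕ) (t : ℕ → ℝ) (ht : StrictMono t)
    (i j : ℕ) (hij : i < j) (hjN : j + 1 ≤ N)
    (I : Bar) (hI : (∃ k ≤ N, I.a = t k) ∧ (∃ l ≤ N, I.b = t l)) :
    (if (t j ∈ I.toSet ∧ I.leftOpen ∧ I.a = t i) then (1:ℕ) else 0) =
      (if I = ⟨.oc, t i, t j⟩ then 1 else 0) +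
        (if I = ⟨.oo, t i, t (j+1)⟩ then 1 else 0) +
        (if (t (j+1) ∈ I.toSet ∧ I.leftOpen ∧ I.a = t i) then 1 else 0) := by
  obtain ⟨-, l, hl, hb⟩ := hI
  obtain ⟨kind, a, b⟩ := I
  simp only at hb
  subst hb
  have h1 : t i < t j := ht hij
  have h2 : t j < t (j+1) := ht (by omega)
  cases kind
  case cc => simp [Bar.toSet, Bar.leftOpen]
  case co => simp [Bar.toSet, Bar.leftOpen]
  case oc =>
    by_cases ha : a = t i
    · subst ha
      rcases lt_trichotomy l j with h | h | h
      · have hx : t l < t j := ht h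
        have hx2 : t l < t (j+1) := hx.trans h2
        simp [Bar.toSet, Bar.leftOpen, Set.mem_Ioc, h1, not_le.mpr hx,
          not_le.mpr hx2, hx.ne]
      · subst h
        simp [Bar.toSet, Bar.leftOpen, Set.mem_Ioc, h1, le_refl, not_le.mpr h2]
      · have hx : t j < t l := ht h
        have hx2 : t (j+1) ≤ t l := ht.le_iff_le.mpr (by omega)
        simp [Bar.toSet, Bar.leftOpen, Set.mem_Ioc, h1, h1.trans h2, le_of_lt hx, hx.ne', hx2]
    · simp [Bar.toSet, Bar.leftOpen, Set.mem_Ioc, ha]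
  case oo =>
    by_cases ha : a = t i
    · subst ha
      rcases lt_trichotomy l (j+1) with h | h | h
      · have hx : t l ≤ t j := ht.le_iff_le.mpr (by omega)
        have hx2 : t l < t (j+1) := lt_of_le_of_lt hx h2
        simp [Bar.toSet, Bar.leftOpen, Set.mem_Ioo, not_lt.mpr hx, hx2.ne,
          not_lt.mpr (le_of_lt hx2)]
      · subst h
        simp [Bar.toSet, Bar.leftOpen, Set.mem_Ioo, h1, h2, lt_irrefl]
      · have hx : t (j+1) < t l := ht h
        simp [Bar.toSet, Bar.leftOpen, Set.mem_Ioo, h1, h1.trans h2, h2.trans hx, hx, hx.ne']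
    · simp [Bar.toSet, Bar.leftOpen, Set.mem_Ioo, ha]

theorem stmt10 (N : ℕ) (t : ℕ → ℝ) (ht : StrictMono t)
    (B : Multiset Bar) (hB : endpointsIn B t N)
    (i j : ℕ) (hij : i < j) (hjN : j + 1 ≤ N) :
    (count (⟨.oc, t i, t j⟩ : Bar) B : ℤ) =
      (countP (fun I => t j ∈ I.toSet ∧ I.leftOpen ∧ I.a = t i) B : ℤ)
        - countP (fun I => t (j + 1) ∈ I.toSet ∧ I.leftOpen ∧ I.a = t i) B
        - count (⟨.oo, t i, t (j + 1)⟩ : Bar) B := by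
  have key : ∀ (C : Multiset Bar), endpointsIn C t N →
      countP (fun I => t j ∈ I.toSet ∧ I.leftOpen ∧ I.a = t i) C =
        count (⟨.oc, t i, t j⟩ : Bar) C + count (⟨.oo, t i, t (j+1)⟩ : Bar) C +
        countP (fun I => t (j + 1) ∈ I.toSet ∧ I.leftOpen ∧ I.a = t i) C := by
    intro C
    induction C using Multiset.induction_on with
    | empty => intro _; simp
    | cons I s ih =>
      intro hC
      have hI := hC I (mem_cons_self I s)
      have hs : endpointsIn s t N := fun J hJ => hC J (mem_cons_of_mem hJ)
      rw [countP_cons, countP_cons, count_cons, count_cons, ih hs]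
      have haux := aux10 N t ht i j hij hjN I hI
      have e1 : (if (⟨.oc, t i, t j⟩ : Bar) = I then (1:ℕ) else 0)
          = (if I = ⟨.oc, t i, t j⟩ then (1:ℕ) else 0) := by simp [eq_comm]
      have e2 : (if (⟨.oo, t i, t (j+1)⟩ : Bar) = I then (1:ℕ) else 0)
          = (if I = ⟨.oo, t i, t (j+1)⟩ then (1:ℕ) else 0) := by simp [eq_comm]
      rw [e1, e2]
      omega
  have h := key B hB
  omega
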